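/- arXiv:2005.08814 — 2 statements merged into one kernel-verified Lean document; each statement's English description precedes it below -/
import Mathlib

section
/- For every 0<α<1 there exists a constant C=C(α)>1 such that the following holds. Let β∈ℝ, z(s)=βs+z̃(s) with z̃∈C(ℝ), and let c∈C(ℝ) with ‖c‖_∞≤1. Define Φ(ξ,s)=K(Z(ξ,s)+c(s)/ξ)−K(Z(ξ,s)), where K(x)=1/(1+x²) and Z(ξ,s)=(z(s)−z(s−ξ))/ξ. Then for every f∈C*^{1,α}(ℝ), the principal value defining T_Φ(f) exists and ‖T_Φ(f)‖₀* ≤ C·‖f‖_{1,α}*·‖c‖_∞^α. -/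
open MeasureTheory Filter Topology Set
open scoped ENNReal

noncomputable section

/-- Weighted sup norm `‖f‖₀* = sup_s (1+|s|^{1+α})|f(s)|`. -/
def wSup (α : ℝ) (f : ℝ → ℝ) : ℝ≥0∞ :=
  ⨆ s : ℝ, ENNReal.ofReal ((1 + |s| ^ (1 + α)) * |f s|)

/-- Weighted Hölder seminorm `[f]_α*`. -/
def wHolder (α : ℝ) (f : ℝ → ℝ) : ℝ≥0∞ :=
  ⨆ s : ℝ, ⨆ ξ : {ξ : ℝ // 0 < |ξ| ∧ |ξ| ≤ 1},
    ENNReal.ofReal ((1 + |s| ^ (1 + α)) * |f (s - ξ.1) - f s| / |ξ.1| ^ α)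

/-- Weighted norm `‖f‖_{k,α}*`. -/
def wNorm (α : ℝ) (k : ℕ) (f : ℝ → ℝ) : ℝ≥0∞ :=
  (⨆ s : ℝ, ⨆ j : Fin (k + 1),
      ENNReal.ofReal ((1 + |s| ^ (1 + α)) * |iteratedDeriv j.1 f s|))
    + wHolder α (iteratedDeriv k f)

/-- Membership in the weighted Hölder space `C*^{k,α}(ℝ)`. -/
def CStar (α : ℝ) (k : ℕ) (f : ℝ → ℝ) : Prop :=
  ContDiff ℝ k f ∧ wNorm α k f < ⊤

/-- Truncated singular integral defining `T_Φ(g)(s)`; the operator value is its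
limit as `R → ∞`. -/
def TInt (Φ : ℝ → ℝ → ℝ) (g : ℝ → ℝ) (s R : ℝ) : ℝ :=
  (1 / (2 * Real.pi)) * ∫ ξ in (-R)..R, ((deriv g (s - ξ) - deriv g s) / ξ) * Φ ξ s

/-- `K(x) = 1/(1+x²)`. -/
def Kf (x : ℝ) : ℝ := 1 / (1 + x ^ 2)

/-- `Z(ξ,s) = (z(s) - z(s-ξ))/ξ`. -/
def Zf (z : ℝ → ℝ) (ξ s : ℝ) : ℝ := (z s - z (s - ξ)) / ξ

/-- `σ(a) = (1-a²)/(1+a²)²`. -/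
def sigmaF (a : ℝ) : ℝ := (1 - a ^ 2) / (1 + a ^ 2) ^ 2

/-- `s ↦ βs + f(s)`. -/
def lineFun (β : ℝ) (f : ℝ → ℝ) (s : ℝ) : ℝ := β * s + f s

/-- `(s,t) ↦ βs + f(s,t)`. -/
def lineFun2 (β : ℝ) (f : ℝ → ℝ → ℝ) (s t : ℝ) : ℝ := β * s + f s t

/-! ### Auxiliary lemmas -/

lemma Kf_pos' (x : ℝ) : 0 < Kf x := by unfold Kf; positivity

lemma Kf_le_one' (x : ℝ) : Kf x ≤ 1 := by
  unfold Kf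
  rw [div_le_one (by positivity)]
  nlinarith [sq_nonneg x]

lemma Kf_sub_le_two' (a b : ℝ) : |Kf a - Kf b| ≤ 2 := by
  have h1 := Kf_pos' a; have h2 := Kf_pos' b
  have h3 := Kf_le_one' a; have h4 := Kf_le_one' b
  rw [abs_le]; constructor <;> linarith

lemma Kf_lip' (a b : ℝ) : |Kf a - Kf b| ≤ |a - b| := by
  have ha : (0:ℝ) < 1 + a^2 := by positivity
  have hb : (0:ℝ) < 1 + b^2 := by positivity
  have h1 : Kf a - Kf b = ((a - b) * (-(a+b))) / ((1+a^2)*(1+b^2)) := by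
    unfold Kf; field_simp; ring
  rw [h1, abs_div, abs_mul, abs_of_pos (by positivity : (0:ℝ) < (1+a^2)*(1+b^2)),
    div_le_iff₀ (by positivity)]
  have h2 : |-(a+b)| ≤ (1+a^2)*(1+b^2) := by
    rw [abs_neg]
    rcases abs_cases (a+b) with ⟨h,_⟩|⟨h,_⟩ <;> rw [h] <;>
      nlinarith [sq_nonneg (a-1), sq_nonneg (b-1), sq_nonneg (a+1), sq_nonneg (b+1),
        sq_nonneg (a*b)]
  exact mul_le_mul_of_nonneg_left h2 (abs_nonneg _)

lemma weight_ineq' {α : ℝ} (hα0 : 0 < α) (hα1 : α < 1) (s ξ : ℝ) :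
    |s| ^ (1+α) ≤ 4 * (|s - ξ| ^ (1+α) + |ξ| ^ (1+α)) := by
  have hp0 : 0 ≤ 1 + α := by positivity
  have h1 : |s| ≤ |s - ξ| + |ξ| := by
    calc |s| = |(s - ξ) + ξ| := by ring_nf
      _ ≤ |s - ξ| + |ξ| := abs_add_le _ _
  set a := |s - ξ|; set b := |ξ|
  have ha : 0 ≤ a := abs_nonneg _
  have hb : 0 ≤ b := abs_nonneg _
  have h2 : a + b ≤ 2 * max a b := by
    rcases max_cases a b with ⟨h,h'⟩|⟨h,h'⟩ <;> rw [h] <;> linarith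
  have h3 : |s| ^ (1+α) ≤ (2 * max a b) ^ (1+α) :=
    Real.rpow_le_rpow (abs_nonneg _) (h1.trans h2) hp0
  have h4 : (2 * max a b) ^ (1+α) = 2 ^ (1+α) * (max a b) ^ (1+α) :=
    Real.mul_rpow (by norm_num) (le_max_of_le_left ha)
  have h5 : (2:ℝ) ^ (1+α) ≤ 4 := by
    have h5a : (2:ℝ) ^ (1+α) ≤ 2 ^ (2:ℝ) :=
      Real.rpow_le_rpow_of_exponent_le one_le_two (by linarith)
    have h6 : (2:ℝ) ^ (2:ℝ) = 4 := by
      rw [show (2:ℝ) = ((2:ℕ):ℝ) by norm_num, Real.rpow_natCast]; norm_num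
    linarith
  have h7 : (max a b) ^ (1+α) ≤ a ^ (1+α) + b ^ (1+α) := by
    rcases max_cases a b with ⟨h,_⟩|⟨h,_⟩ <;> rw [h]
    · nlinarith [Real.rpow_nonneg hb (1+α)]
    · nlinarith [Real.rpow_nonneg ha (1+α)]
  calc |s| ^ (1+α) ≤ 2 ^ (1+α) * (max a b) ^ (1+α) := by rw [← h4]; exact h3
    _ ≤ 4 * (a ^ (1+α) + b ^ (1+α)) :=
        mul_le_mul h5 h7 (Real.rpow_nonneg (le_max_of_le_left ha) _) (by norm_num)

lemma integrable_comp_abs' {g : ℝ → ℝ} (hg : IntegrableOn g (Ioi 0)) :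
    Integrable (fun x => g |x|) := by
  have h1 : IntegrableOn (fun x => g |x|) (Ioi 0) := by
    apply hg.congr_fun _ measurableSet_Ioi
    intro x hx
    show g x = g |x|
    rw [abs_of_pos hx]
  have h2 : IntegrableOn (fun x => g |x|) (Iic 0) := by
    rw [← Measure.map_neg_eq_self (volume : Measure ℝ)]
    have m : MeasurableEmbedding fun x : ℝ => -x := (Homeomorph.neg ℝ).measurableEmbedding
    rw [m.integrableOn_map_iff]
    simp_rw [Function.comp_def, abs_neg, neg_preimage, neg_Iic, neg_zero]
    rw [integrableOn_Ici_iff_integrableOn_Ioi]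
    exact h1
  have := h2.union h1
  rwa [Iic_union_Ioi, integrableOn_univ] at this

lemma self_le_rpow_alpha' {α t : ℝ} (hα1 : α ≤ 1) (ht0 : 0 < t) (ht1 : t ≤ 1) :
    t ≤ t ^ α := by
  nth_rewrite 1 [← Real.rpow_one t]
  exact Real.rpow_le_rpow_of_exponent_ge ht0 ht1 hα1

lemma weight_inv_cont' {α : ℝ} (hα0 : 0 < α) :
    Continuous (fun t : ℝ => (1 + |t| ^ (1+α))⁻¹) := by
  apply Continuous.inv₀
  · exact continuous_const.add ((Real.continuous_rpow_const (by positivity)).comp continuous_abs)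
  · intro x
    have := Real.rpow_nonneg (abs_nonneg x) (1+α)
    positivity

lemma weight_inv_integrableOn' {α : ℝ} (hα0 : 0 < α) :
    IntegrableOn (fun t : ℝ => (1 + |t| ^ (1+α))⁻¹) (Ioi 0) := by
  have hcont := weight_inv_cont' hα0
  have h1 : IntegrableOn (fun t : ℝ => (1 + |t| ^ (1+α))⁻¹) (Ioc 0 1) :=
    (hcont.integrableOn_Icc (a := 0) (b := 1)).mono_set Ioc_subset_Icc_self
  have h2 : IntegrableOn (fun t : ℝ => (1 + |t| ^ (1+α))⁻¹) (Ioi 1) := by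
    apply Integrable.mono' (integrableOn_Ioi_rpow_of_lt (a := -(1+α)) (by linarith) one_pos)
      hcont.aestronglyMeasurable.restrict
    filter_upwards [ae_restrict_mem measurableSet_Ioi] with t ht
    have ht1 : (1:ℝ) < t := ht
    have htp : (0:ℝ) < t ^ (1+α) := Real.rpow_pos_of_pos (by linarith) _
    have habs : |t| = t := abs_of_pos (by linarith)
    rw [Real.norm_eq_abs, habs, abs_of_pos (by positivity), Real.rpow_neg (by linarith)]
    apply inv_anti₀ htp
    linarith
  have := h1.union h2
  rwa [Ioc_union_Ioi_eq_Ioi (by norm_num : (0:ℝ) ≤ 1)] at this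

lemma integrable_weight_inv' {α : ℝ} (hα0 : 0 < α) :
    Integrable (fun t : ℝ => (1 + |t| ^ (1+α))⁻¹) := by
  have := integrable_comp_abs' (weight_inv_integrableOn' hα0)
  simpa [abs_abs] using this

/-- The majorant profile on `(0,∞)`. -/
def Qmaj (α b : ℝ) (t : ℝ) : ℝ :=
  (Ioc 0 b).indicator (fun t => 2 * t ^ (α-1)) t
    + (Ioc b 1).indicator (fun t => b * t ^ (α-2)) t
    + (Ioi 1).indicator (fun t => 5 * b ^ α * t ^ (-(2:ℝ))) t

lemma Qmaj_nonneg {α b : ℝ} (hb0 : 0 < b) (t : ℝ) : 0 ≤ Qmaj α b t := by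
  unfold Qmaj
  have h1 : 0 ≤ (Ioc 0 b).indicator (fun t => 2 * t ^ (α-1)) t :=
    Set.indicator_nonneg (fun x hx => by have := hx.1; positivity) t
  have h2 : 0 ≤ (Ioc b 1).indicator (fun t => b * t ^ (α-2)) t :=
    Set.indicator_nonneg (fun x hx => by have := hb0.trans hx.1; positivity) t
  have h3 : 0 ≤ (Ioi 1).indicator (fun t => 5 * b ^ α * t ^ (-(2:ℝ))) t := by
    apply Set.indicator_nonneg
    intro x hx
    have hx1 : (0:ℝ) < x := lt_trans one_pos hx
    positivity
  linarith

lemma Qmaj_int1 {α b : ℝ} (hα0 : 0 < α) (hα1 : α < 1) (hb0 : 0 < b) (hb1 : b ≤ 1) :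
    Integrable ((Ioc (0:ℝ) b).indicator (fun t => 2 * t ^ (α-1))) := by
  rw [integrable_indicator_iff measurableSet_Ioc]
  exact ((intervalIntegral.intervalIntegrable_rpow' (by linarith) (a := 0) (b := b)).1).const_mul 2

lemma Qmaj_int2 {α b : ℝ} (hα0 : 0 < α) (hα1 : α < 1) (hb0 : 0 < b) (hb1 : b ≤ 1) :
    Integrable ((Ioc b (1:ℝ)).indicator (fun t => b * t ^ (α-2))) := by
  rw [integrable_indicator_iff measurableSet_Ioc]
  have h0 : (0:ℝ) ∉ Set.uIcc b 1 := by
    rw [uIcc_of_le hb1]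
    intro h
    exact absurd h.1 (by linarith)
  exact ((intervalIntegral.intervalIntegrable_rpow (μ := volume) (Or.inr h0) (a := b) (b := 1)).1).const_mul b

lemma Qmaj_int3 {α b : ℝ} (hb0 : 0 < b) :
    Integrable ((Ioi (1:ℝ)).indicator (fun t => 5 * b ^ α * t ^ (-(2:ℝ)))) := by
  rw [integrable_indicator_iff measurableSet_Ioi]
  exact (integrableOn_Ioi_rpow_of_lt (by norm_num) one_pos).const_mul _

lemma Qmaj_integrable {α b : ℝ} (hα0 : 0 < α) (hα1 : α < 1) (hb0 : 0 < b) (hb1 : b ≤ 1) :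
    Integrable (Qmaj α b) := by
  unfold Qmaj
  exact ((Qmaj_int1 hα0 hα1 hb0 hb1).add (Qmaj_int2 hα0 hα1 hb0 hb1)).add (Qmaj_int3 hb0)

lemma Qmaj_integral_le {α b : ℝ} (hα0 : 0 < α) (hα1 : α < 1) (hb0 : 0 < b) (hb1 : b ≤ 1) :
    ∫ t : ℝ, Qmaj α b t ≤ b ^ α * (2/α + 1/(1-α) + 5) := by
  have hba : (0:ℝ) < b ^ α := Real.rpow_pos_of_pos hb0 _
  have e1 : ∫ t : ℝ, (Ioc (0:ℝ) b).indicator (fun t => 2 * t ^ (α-1)) t = 2 * (b ^ α / α) := by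
    rw [integral_indicator measurableSet_Ioc, ← intervalIntegral.integral_of_le hb0.le,
      intervalIntegral.integral_const_mul, integral_rpow (Or.inl (by linarith))]
    rw [show α - 1 + 1 = α by ring, Real.zero_rpow hα0.ne']
    ring
  have e2 : ∫ t : ℝ, (Ioc b (1:ℝ)).indicator (fun t => b * t ^ (α-2)) t
      ≤ b ^ α / (1-α) := by
    have h0 : (0:ℝ) ∉ Set.uIcc b 1 := by
      rw [uIcc_of_le hb1]
      intro h
      exact absurd h.1 (by linarith)
    rw [integral_indicator measurableSet_Ioc, ← intervalIntegral.integral_of_le hb1,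
      intervalIntegral.integral_const_mul, integral_rpow (Or.inr ⟨by intro h; norm_num at h; linarith, h0⟩)]
    rw [show α - 2 + 1 = α - 1 by ring, Real.one_rpow]
    have hbb : b * b ^ (α-1) = b ^ α := by
      have h := Real.rpow_add hb0 1 (α-1)
      rw [Real.rpow_one, show (1:ℝ) + (α - 1) = α by ring] at h
      exact h.symm
    have hb1' : (0:ℝ) < b ^ (α - 1) := Real.rpow_pos_of_pos hb0 _
    have hmul : b * (1 - b ^ (α-1)) = b - b ^ α := by rw [mul_sub, mul_one, hbb]
    have heq : b * ((1 - b ^ (α-1)) / (α - 1)) = (b - b ^ α) / (α - 1) := by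
      rw [← mul_div_assoc, hmul]
    have heq2 : (b - b ^ α) / (α - 1) = (b ^ α - b) / (1 - α) := by
      rw [div_eq_div_iff (by linarith) (by linarith)]
      ring
    rw [heq, heq2]
    gcongr
    · linarith
  have e3 : ∫ t : ℝ, (Ioi (1:ℝ)).indicator (fun t => 5 * b ^ α * t ^ (-(2:ℝ))) t
      = 5 * b ^ α := by
    rw [integral_indicator measurableSet_Ioi, MeasureTheory.integral_const_mul,
      integral_Ioi_rpow_of_lt (by norm_num) one_pos]
    norm_num
  have hint1 := Qmaj_int1 hα0 hα1 hb0 hb1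
  have hint2 := Qmaj_int2 hα0 hα1 hb0 hb1
  have hint3 := Qmaj_int3 (α := α) hb0
  have esum : ∫ t : ℝ, Qmaj α b t
      = (∫ t : ℝ, (Ioc (0:ℝ) b).indicator (fun t => 2 * t ^ (α-1)) t)
        + (∫ t : ℝ, (Ioc b (1:ℝ)).indicator (fun t => b * t ^ (α-2)) t)
        + ∫ t : ℝ, (Ioi (1:ℝ)).indicator (fun t => 5 * b ^ α * t ^ (-(2:ℝ))) t := by
    unfold Qmaj
    have hint12 : Integrable (fun t : ℝ => (Ioc (0:ℝ) b).indicator (fun t => 2 * t ^ (α-1)) t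
        + (Ioc b (1:ℝ)).indicator (fun t => b * t ^ (α-2)) t) := hint1.add hint2
    rw [integral_add hint12 hint3, integral_add hint1 hint2]
  rw [esum, e1, e3]
  have : b ^ α * (2/α + 1/(1-α) + 5) = 2 * (b^α/α) + b^α/(1-α) + 5*b^α := by
    field_simp
  linarith

set_option maxHeartbeats 2000000 in
/-- Lemma 3.4: continuity of `c ↦ K(Z + c/ξ)` at `c = 0`:
`‖T_Φ f‖₀* ≤ C ‖f‖_{1,α}* ‖c‖_∞^α` for `Φ = K(Z + c/ξ) - K(Z)`. -/
theorem TPhi_small_c_estimate :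
    ∀ α : ℝ, 0 < α → α < 1 →
    ∃ C : ℝ, 1 < C ∧
      ∀ (β : ℝ) (ztil c : ℝ → ℝ), Continuous ztil → Continuous c →
        (∀ s, |c s| ≤ 1) →
        ∀ f : ℝ → ℝ, CStar α 1 f →
          ∃ Tf : ℝ → ℝ,
            (∀ s, Tendsto
              (fun R => TInt (fun ξ s' => Kf (Zf (lineFun β ztil) ξ s' + c s' / ξ)
                  - Kf (Zf (lineFun β ztil) ξ s')) f s R) atTop (𝓝 (Tf s))) ∧
            ∀ B : ℝ, 0 ≤ B → (∀ s, |c s| ≤ B) →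
              wSup α Tf ≤ ENNReal.ofReal (C * B ^ α) * wNorm α 1 f := by
  intro α hα0 hα1
  have hIw : Integrable (fun t : ℝ => (1 + |t| ^ (1+α))⁻¹) := integrable_weight_inv' hα0
  set Iα : ℝ := ∫ t : ℝ, (1 + |t| ^ (1+α))⁻¹ with hIαdef
  have hIα0 : 0 ≤ Iα := integral_nonneg (fun t => by positivity)
  set C : ℝ := 2 * (2/α + 1/(1-α) + 5) + 4 * Iα + 2 with hCdef
  have hC1 : 1 < C := by
    have h1 : 0 < 2/α := by positivity
    have h2 : 0 < 1/(1-α) := by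
      have : 0 < 1 - α := by linarith
      positivity
    rw [hCdef]
    linarith
  have hC0 : 0 ≤ C := by linarith
  refine ⟨C, hC1, ?_⟩
  intro β ztil c hzc hcc hc1 f hf
  obtain ⟨hfC, hfN⟩ := hf
  set z : ℝ → ℝ := lineFun β ztil with hzdef
  have hzcont : Continuous z := (continuous_const.mul continuous_id).add hzc
  set F : ℝ → ℝ := deriv f with hFdef
  have hFcont : Continuous F := hfC.continuous_deriv le_rfl
  set N : ℝ≥0∞ := wNorm α 1 f with hNdef
  have hNtop : N ≠ ⊤ := hfN.ne
  set M : ℝ := N.toReal with hMdef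
  have hM0 : 0 ≤ M := ENNReal.toReal_nonneg
  -- the weight
  have hw1 : ∀ t : ℝ, (1:ℝ) ≤ 1 + |t| ^ (1+α) := fun t => by
    have := Real.rpow_nonneg (abs_nonneg t) (1+α); linarith
  have hwpos : ∀ t : ℝ, (0:ℝ) < 1 + |t| ^ (1+α) := fun t => lt_of_lt_of_le one_pos (hw1 t)
  -- sup bound on the derivative
  have hMsup : ∀ t : ℝ, (1 + |t| ^ (1+α)) * |F t| ≤ M := by
    intro t
    have h1 : ENNReal.ofReal ((1 + |t| ^ (1+α)) * |iteratedDeriv 1 f t|) ≤ N := by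
      refine le_trans (le_trans ?_ (le_iSup (fun s : ℝ => ⨆ j : Fin 2,
        ENNReal.ofReal ((1 + |s| ^ (1 + α)) * |iteratedDeriv j.1 f s|)) t)) le_self_add
      exact le_iSup (fun j : Fin 2 =>
        ENNReal.ofReal ((1 + |t| ^ (1 + α)) * |iteratedDeriv j.1 f t|)) (1 : Fin 2)
    rw [iteratedDeriv_one] at h1
    exact (ENNReal.ofReal_le_iff_le_toReal hNtop).1 h1
  -- Hölder bound on the derivative
  have hMhol : ∀ s ξ : ℝ, 0 < |ξ| → |ξ| ≤ 1 →
      (1 + |s| ^ (1+α)) * |F (s - ξ) - F s| ≤ M * |ξ| ^ α := by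
    intro s ξ h0 h1'
    have h1 : ENNReal.ofReal ((1 + |s| ^ (1+α)) * |iteratedDeriv 1 f (s - ξ)
        - iteratedDeriv 1 f s| / |ξ| ^ α) ≤ N := by
      refine le_trans (le_trans ?_ (le_iSup (fun s' : ℝ =>
        ⨆ ξ' : {ξ : ℝ // 0 < |ξ| ∧ |ξ| ≤ 1}, ENNReal.ofReal ((1 + |s'| ^ (1 + α))
          * |iteratedDeriv 1 f (s' - ξ'.1) - iteratedDeriv 1 f s'| / |ξ'.1| ^ α)) s)) le_add_self
      exact le_iSup (fun ξ' : {ξ : ℝ // 0 < |ξ| ∧ |ξ| ≤ 1} =>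
        ENNReal.ofReal ((1 + |s| ^ (1 + α))
          * |iteratedDeriv 1 f (s - ξ'.1) - iteratedDeriv 1 f s| / |ξ'.1| ^ α)) ⟨ξ, h0, h1'⟩
    rw [iteratedDeriv_one] at h1
    have h2 := (ENNReal.ofReal_le_iff_le_toReal hNtop).1 h1
    have h3 : (0:ℝ) < |ξ| ^ α := Real.rpow_pos_of_pos h0 _
    rw [div_le_iff₀ h3] at h2
    exact h2
  -- the integrand
  set h : ℝ → ℝ → ℝ := fun s ξ =>
    ((F (s - ξ) - F s) / ξ) * (Kf (Zf z ξ s + c s / ξ) - Kf (Zf z ξ s)) with hhdef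
  -- measurability
  have hmeas : ∀ s : ℝ, AEStronglyMeasurable (h s) volume := by
    intro s
    have mK : Continuous Kf := by
      unfold Kf
      exact continuous_const.div (by continuity) (fun x => by positivity)
    have mZ : Measurable fun ξ : ℝ => Zf z ξ s := by
      unfold Zf
      exact (measurable_const.sub
        (hzcont.comp (continuous_const.sub continuous_id)).measurable).div measurable_id
    have m1 : Measurable fun ξ : ℝ => (F (s - ξ) - F s) / ξ :=
      ((hFcont.comp (continuous_const.sub continuous_id)).measurable.sub
        measurable_const).div measurable_id
    have m2 : Measurable fun ξ : ℝ =>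
        Kf (Zf z ξ s + c s / ξ) - Kf (Zf z ξ s) :=
      ((mK.measurable.comp (mZ.add (measurable_const.div measurable_id))).sub
        (mK.measurable.comp mZ))
    exact (m1.mul m2).aestronglyMeasurable
  -- |φ| bounds
  have hphi2 : ∀ s ξ : ℝ, |Kf (Zf z ξ s + c s / ξ) - Kf (Zf z ξ s)| ≤ 2 :=
    fun s ξ => Kf_sub_le_two' _ _
  have hphiB : ∀ (b : ℝ), (∀ u, |c u| ≤ b) → ∀ s ξ : ℝ,
      |Kf (Zf z ξ s + c s / ξ) - Kf (Zf z ξ s)| ≤ b / |ξ| := by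
    intro b hb s ξ
    calc |Kf (Zf z ξ s + c s / ξ) - Kf (Zf z ξ s)|
        ≤ |Zf z ξ s + c s / ξ - Zf z ξ s| := Kf_lip' _ _
      _ = |c s| / |ξ| := by rw [add_sub_cancel_left, abs_div]
      _ ≤ b / |ξ| := by
          rcases (abs_nonneg ξ).eq_or_lt with hh|hh
          · rw [← hh]; simp
          · exact (div_le_div_iff_of_pos_right hh).2 (hb s)
  -- the key pointwise bound
  have key : ∀ (b : ℝ), 0 < b → b ≤ 1 → (∀ u, |c u| ≤ b) → ∀ s ξ : ℝ, ξ ≠ 0 →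
      (1 + |s| ^ (1+α)) * |h s ξ| ≤
        M * (Qmaj α b |ξ| + 4 * b ^ α * (1 + |s - ξ| ^ (1+α))⁻¹) := by
    intro b hb0 hb1 hcb s ξ hξ
    have ht0 : 0 < |ξ| := abs_pos.2 hξ
    have hba : (0:ℝ) ≤ b ^ α := Real.rpow_nonneg hb0.le _
    have hwsb : (0:ℝ) < 1 + |s - ξ| ^ (1+α) := hwpos (s - ξ)
    have hi4 : (0:ℝ) ≤ 4 * b ^ α * (1 + |s - ξ| ^ (1+α))⁻¹ := by positivity
    have habs : |h s ξ| = |F (s - ξ) - F s| / |ξ|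
        * |Kf (Zf z ξ s + c s / ξ) - Kf (Zf z ξ s)| := by
      simp only [hhdef]
      rw [abs_mul, abs_div]
    have htwo : (|ξ|:ℝ) ^ (2:ℝ) = ξ^2 := by
      rw [show (2:ℝ) = ((2:ℕ):ℝ) by norm_num, Real.rpow_natCast, sq_abs]
    have hξ2 : (0:ℝ) < ξ^2 := lt_of_le_of_ne (sq_nonneg ξ) (Ne.symm (pow_ne_zero 2 hξ))
    rcases le_or_gt (|ξ|) b with hcase1 | hrest
    · -- 0 < |ξ| ≤ b
      have hind : Qmaj α b |ξ| = 2 * |ξ| ^ (α-1) := by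
        unfold Qmaj
        rw [indicator_of_mem (show |ξ| ∈ Ioc 0 b from ⟨ht0, hcase1⟩),
          indicator_of_notMem (fun hmem => absurd hmem.1 (not_lt.2 hcase1)),
          indicator_of_notMem (fun hmem =>
            absurd (mem_Ioi.1 hmem) (not_lt.2 (hcase1.trans hb1)))]
        ring
      have hd := hMhol s ξ ht0 (hcase1.trans hb1)
      have hphi := hphi2 s ξ
      have calc1 : (1 + |s| ^ (1+α)) * |h s ξ| ≤ (M * |ξ| ^ α) * 2 / |ξ| := by
        rw [habs, show (1 + |s| ^ (1+α)) * (|F (s - ξ) - F s| / |ξ|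
          * |Kf (Zf z ξ s + c s / ξ) - Kf (Zf z ξ s)|)
          = ((1 + |s| ^ (1+α)) * |F (s - ξ) - F s|)
            * |Kf (Zf z ξ s + c s / ξ) - Kf (Zf z ξ s)| / |ξ| from by ring]
        gcongr
      have eq1 : (M * |ξ| ^ α) * 2 / |ξ| = M * (2 * |ξ| ^ (α-1)) := by
        rw [Real.rpow_sub ht0, Real.rpow_one]
        ring
      rw [hind]
      calc (1 + |s| ^ (1+α)) * |h s ξ| ≤ M * (2 * |ξ| ^ (α-1)) := by
            rw [← eq1]; exact calc1
        _ ≤ M * (2 * |ξ| ^ (α-1) + 4 * b ^ α * (1 + |s - ξ| ^ (1+α))⁻¹) :=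
            mul_le_mul_of_nonneg_left (le_add_of_nonneg_right hi4) hM0
    · rcases le_or_gt (|ξ|) 1 with hcase2 | hcase3
      · -- b < |ξ| ≤ 1
        have hind : Qmaj α b |ξ| = b * |ξ| ^ (α-2) := by
          unfold Qmaj
          rw [indicator_of_notMem (fun hmem => absurd hmem.2 (not_le.2 hrest)),
            indicator_of_mem (show |ξ| ∈ Ioc b 1 from ⟨hrest, hcase2⟩),
            indicator_of_notMem (fun hmem =>
              absurd (mem_Ioi.1 hmem) (not_lt.2 hcase2))]
          ring
        have hd := hMhol s ξ ht0 hcase2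
        have hphi := hphiB b hcb s ξ
        have calc1 : (1 + |s| ^ (1+α)) * |h s ξ| ≤ (M * |ξ| ^ α) * (b / |ξ|) / |ξ| := by
          rw [habs, show (1 + |s| ^ (1+α)) * (|F (s - ξ) - F s| / |ξ|
            * |Kf (Zf z ξ s + c s / ξ) - Kf (Zf z ξ s)|)
            = ((1 + |s| ^ (1+α)) * |F (s - ξ) - F s|)
              * |Kf (Zf z ξ s + c s / ξ) - Kf (Zf z ξ s)| / |ξ| from by ring]
          gcongr
        have eq1 : (M * |ξ| ^ α) * (b / |ξ|) / |ξ| = M * (b * |ξ| ^ (α-2)) := by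
          rw [show α - 2 = α - 1 - 1 by ring, Real.rpow_sub ht0, Real.rpow_sub ht0,
            Real.rpow_one]
          field_simp
        rw [hind]
        calc (1 + |s| ^ (1+α)) * |h s ξ| ≤ M * (b * |ξ| ^ (α-2)) := by
              rw [← eq1]; exact calc1
          _ ≤ M * (b * |ξ| ^ (α-2) + 4 * b ^ α * (1 + |s - ξ| ^ (1+α))⁻¹) :=
              mul_le_mul_of_nonneg_left (le_add_of_nonneg_right hi4) hM0
      · -- 1 < |ξ|
        have hind : Qmaj α b |ξ| = 5 * b ^ α * |ξ| ^ (-(2:ℝ)) := by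
          unfold Qmaj
          rw [indicator_of_notMem (fun hmem =>
              absurd hmem.2 (not_le.2 (lt_of_le_of_lt hb1 hcase3))),
            indicator_of_notMem (fun hmem => absurd hmem.2 (not_le.2 hcase3)),
            indicator_of_mem (mem_Ioi.2 hcase3)]
          ring
        have hb_le : b ≤ b ^ α := self_le_rpow_alpha' hα1.le hb0 hb1
        have hFr : |F (s - ξ)| ≤ M / (1 + |s - ξ| ^ (1+α)) := by
          rw [le_div_iff₀ hwsb, mul_comm]
          exact hMsup (s - ξ)
        have hws : 1 + |s| ^ (1+α) ≤ 4 * (1 + |s - ξ| ^ (1+α)) + 4 * |ξ| ^ (1+α) := by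
          have h1 := weight_ineq' hα0 hα1 s ξ
          have h2 : (0:ℝ) ≤ |s - ξ| ^ (1+α) := Real.rpow_nonneg (abs_nonneg _) _
          linarith
        have hsub : |F (s - ξ) - F s| ≤ |F (s - ξ)| + |F s| := by
          calc |F (s - ξ) - F s| = |F (s - ξ) + -(F s)| := by rw [sub_eq_add_neg]
            _ ≤ |F (s - ξ)| + |-(F s)| := abs_add_le _ _
            _ = |F (s - ξ)| + |F s| := by rw [abs_neg]
        have hphi := hphiB b hcb s ξ
        -- weighted derivative bounds
        have hw2 : (1 + |s| ^ (1+α)) * |F (s - ξ)|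
            ≤ 4 * M + 4 * |ξ| ^ (1+α) * M / (1 + |s - ξ| ^ (1+α)) := by
          calc (1 + |s| ^ (1+α)) * |F (s - ξ)|
              ≤ (4 * (1 + |s - ξ| ^ (1+α)) + 4 * |ξ| ^ (1+α)) * |F (s - ξ)| :=
                mul_le_mul_of_nonneg_right hws (abs_nonneg _)
            _ ≤ (4 * (1 + |s - ξ| ^ (1+α)) + 4 * |ξ| ^ (1+α))
                  * (M / (1 + |s - ξ| ^ (1+α))) := by
                apply mul_le_mul_of_nonneg_left hFr
                have := Real.rpow_nonneg (abs_nonneg ξ) (1+α)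
                linarith
            _ = 4 * M + 4 * |ξ| ^ (1+α) * M / (1 + |s - ξ| ^ (1+α)) := by
                field_simp
        have calc1 : (1 + |s| ^ (1+α)) * |h s ξ|
            ≤ (4 * M + 4 * |ξ| ^ (1+α) * M / (1 + |s - ξ| ^ (1+α)) + M)
              * (b / |ξ|) / |ξ| := by
          rw [habs, show (1 + |s| ^ (1+α)) * (|F (s - ξ) - F s| / |ξ|
            * |Kf (Zf z ξ s + c s / ξ) - Kf (Zf z ξ s)|)
            = ((1 + |s| ^ (1+α)) * |F (s - ξ) - F s|)
              * |Kf (Zf z ξ s + c s / ξ) - Kf (Zf z ξ s)| / |ξ| from by ring]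
          have hstep : (1 + |s| ^ (1+α)) * |F (s - ξ) - F s|
              ≤ 4 * M + 4 * |ξ| ^ (1+α) * M / (1 + |s - ξ| ^ (1+α)) + M := by
            calc (1 + |s| ^ (1+α)) * |F (s - ξ) - F s|
                ≤ (1 + |s| ^ (1+α)) * (|F (s - ξ)| + |F s|) :=
                  mul_le_mul_of_nonneg_left hsub (hwpos s).le
              _ = (1 + |s| ^ (1+α)) * |F (s - ξ)| + (1 + |s| ^ (1+α)) * |F s| := by
                  ring
              _ ≤ (4 * M + 4 * |ξ| ^ (1+α) * M / (1 + |s - ξ| ^ (1+α))) + M := by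
                  have := hMsup s
                  linarith
          gcongr
        -- simplify the right-hand side
        have eq1 : (4 * M + 4 * |ξ| ^ (1+α) * M / (1 + |s - ξ| ^ (1+α)) + M)
              * (b / |ξ|) / |ξ|
            = 5 * M * b / (ξ^2)
              + 4 * M * b * |ξ| ^ (1+α) / ((1 + |s - ξ| ^ (1+α)) * (ξ^2)) := by
          field_simp
          ring_nf
          simp only [sq_abs]
          ring
        have hp1 : 5 * M * b / (ξ^2) ≤ M * (5 * b ^ α * |ξ| ^ (-(2:ℝ))) := by
          have e2 : |ξ| ^ (-(2:ℝ)) = (ξ^2)⁻¹ := by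
            rw [Real.rpow_neg ht0.le, htwo]
          rw [e2, show M * (5 * b ^ α * (ξ^2)⁻¹) = 5 * M * b ^ α / (ξ^2)
            from by field_simp]
          apply (div_le_div_iff_of_pos_right hξ2).2
          nlinarith [mul_le_mul_of_nonneg_left hb_le (by linarith : (0:ℝ) ≤ 5 * M)]
        have hp2 : 4 * M * b * |ξ| ^ (1+α) / ((1 + |s - ξ| ^ (1+α)) * (ξ^2))
            ≤ M * (4 * b ^ α * (1 + |s - ξ| ^ (1+α))⁻¹) := by
          have htp : |ξ| ^ (1+α) = |ξ| ^ (α-1) * (ξ^2) := by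
            rw [show (1:ℝ) + α = (α-1) + 2 by ring, Real.rpow_add ht0, htwo]
          have hta : |ξ| ^ (α-1) ≤ 1 :=
            Real.rpow_le_one_of_one_le_of_nonpos hcase3.le (by linarith)
          have e3 : 4 * M * b * |ξ| ^ (1+α) / ((1 + |s - ξ| ^ (1+α)) * (ξ^2))
              = 4 * M * (b * |ξ| ^ (α-1)) / (1 + |s - ξ| ^ (1+α)) := by
            rw [htp]
            field_simp
          rw [e3, show M * (4 * b ^ α * (1 + |s - ξ| ^ (1+α))⁻¹)
            = 4 * M * b ^ α / (1 + |s - ξ| ^ (1+α)) from by field_simp]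
          apply (div_le_div_iff_of_pos_right hwsb).2
          have h5 : b * |ξ| ^ (α-1) ≤ b :=
            calc b * |ξ| ^ (α-1) ≤ b * 1 :=
                  mul_le_mul_of_nonneg_left hta hb0.le
              _ = b := mul_one b
          have h6 : b * |ξ| ^ (α-1) ≤ b ^ α := h5.trans hb_le
          exact mul_le_mul_of_nonneg_left h6 (by linarith)
        rw [hind]
        calc (1 + |s| ^ (1+α)) * |h s ξ|
            ≤ (4 * M + 4 * |ξ| ^ (1+α) * M / (1 + |s - ξ| ^ (1+α)) + M)
              * (b / |ξ|) / |ξ| := calc1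
          _ = 5 * M * b / (ξ^2)
              + 4 * M * b * |ξ| ^ (1+α) / ((1 + |s - ξ| ^ (1+α)) * (ξ^2)) := eq1
          _ ≤ M * (5 * b ^ α * |ξ| ^ (-(2:ℝ)))
              + M * (4 * b ^ α * (1 + |s - ξ| ^ (1+α))⁻¹) := add_le_add hp1 hp2
          _ = M * (5 * b ^ α * |ξ| ^ (-(2:ℝ)) + 4 * b ^ α * (1 + |s - ξ| ^ (1+α))⁻¹) := by
              ring
  -- integrability of the majorant
  have Gint : ∀ (b : ℝ), 0 < b → b ≤ 1 → ∀ s : ℝ,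
      Integrable (fun ξ : ℝ =>
        M * (Qmaj α b |ξ| + 4 * b ^ α * (1 + |s - ξ| ^ (1+α))⁻¹)) := by
    intro b hb0 hb1 s
    apply Integrable.const_mul
    apply Integrable.add
    · exact integrable_comp_abs' (Qmaj_integrable hα0 hα1 hb0 hb1).integrableOn
    · exact (hIw.comp_sub_left s).const_mul _
  -- integral of the majorant
  have Gval : ∀ (b : ℝ), 0 < b → b ≤ 1 → ∀ s : ℝ,
      (∫ ξ : ℝ, M * (Qmaj α b |ξ| + 4 * b ^ α * (1 + |s - ξ| ^ (1+α))⁻¹))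
        ≤ M * (b ^ α * C) := by
    intro b hb0 hb1 s
    have hba : (0:ℝ) ≤ b ^ α := Real.rpow_nonneg hb0.le _
    have hA : Integrable (fun ξ : ℝ => Qmaj α b |ξ|) :=
      integrable_comp_abs' (Qmaj_integrable hα0 hα1 hb0 hb1).integrableOn
    have hB : Integrable (fun ξ : ℝ => 4 * b ^ α * (1 + |s - ξ| ^ (1+α))⁻¹) :=
      (hIw.comp_sub_left s).const_mul _
    rw [MeasureTheory.integral_const_mul, integral_add hA hB,
      MeasureTheory.integral_const_mul]
    have eA : ∫ ξ : ℝ, Qmaj α b |ξ| = 2 * ∫ t in Ioi (0:ℝ), Qmaj α b t :=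
      integral_comp_abs
    have eA1 : ∫ t in Ioi (0:ℝ), Qmaj α b t ≤ ∫ t : ℝ, Qmaj α b t :=
      setIntegral_le_integral (Qmaj_integrable hα0 hα1 hb0 hb1)
        (Filter.Eventually.of_forall (fun t => Qmaj_nonneg hb0 t))
    have eA2 := Qmaj_integral_le hα0 hα1 hb0 hb1
    have eB : ∫ ξ : ℝ, (1 + |s - ξ| ^ (1+α))⁻¹ = Iα :=
      integral_sub_left_eq_self (fun t : ℝ => (1 + |t| ^ (1+α))⁻¹) volume s
    rw [eA, eB]
    have expand : b ^ α * C = 2 * (b ^ α * (2/α + 1/(1-α) + 5)) + 4 * b ^ α * Iα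
        + 2 * b ^ α := by
      rw [hCdef]; ring
    have : (2 * ∫ t in Ioi (0:ℝ), Qmaj α b t) + 4 * b ^ α * Iα ≤ b ^ α * C := by
      rw [expand]
      have := eA1.trans eA2
      linarith
    exact mul_le_mul_of_nonneg_left this hM0
  have hae0 : ∀ᵐ ξ : ℝ, ξ ≠ 0 := by
    rw [ae_iff]
    simp only [ne_eq, not_not, setOf_eq_eq_singleton]
    exact measure_singleton 0
  -- integrability of the integrand
  have hint : ∀ s : ℝ, Integrable (h s) := by
    intro s
    apply Integrable.mono' (Gint 1 one_pos le_rfl s) (hmeas s)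
    filter_upwards [hae0] with ξ hξ
    have hk := key 1 one_pos le_rfl hc1 s ξ hξ
    have hw := hw1 s
    have hval : |h s ξ| ≤ (1 + |s| ^ (1+α)) * |h s ξ| := by
      nlinarith [abs_nonneg (h s ξ)]
    rw [Real.norm_eq_abs]
    exact hval.trans hk
  -- the limit function
  set Tf : ℝ → ℝ := fun s => (1 / (2 * Real.pi)) * ∫ ξ : ℝ, h s ξ with hTfdef
  refine ⟨Tf, ?_, ?_⟩
  · intro s
    have h1 := (intervalIntegral_tendsto_integral (hint s)
      tendsto_neg_atTop_atBot tendsto_id).const_mul (1 / (2 * Real.pi))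
    exact h1
  · intro B hB0 hcB
    -- main real estimate
    have main : ∀ s : ℝ, (1 + |s| ^ (1+α)) * |Tf s| ≤ C * B ^ α * M := by
      intro s
      by_cases hB : B = 0
      · have hc0 : ∀ u, c u = 0 := fun u =>
          abs_eq_zero.1 (le_antisymm (by simpa [hB] using hcB u) (abs_nonneg _))
        have hzero : (fun ξ : ℝ => h s ξ) = fun _ => (0:ℝ) := by
          funext ξ
          simp only [hhdef, hc0 s, zero_div, add_zero, sub_self, mul_zero]
        have hTf0 : Tf s = 0 := by
          simp only [hTfdef, hzero, integral_zero, mul_zero]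
        rw [hTf0, abs_zero, mul_zero]
        have : (0:ℝ) ≤ B ^ α := Real.rpow_nonneg hB0 _
        positivity
      · have hBpos : 0 < B := hB0.lt_of_ne (Ne.symm hB)
        set b : ℝ := min B 1 with hbdef
        have hb0 : 0 < b := lt_min hBpos one_pos
        have hb1 : b ≤ 1 := min_le_right _ _
        have hcb : ∀ u, |c u| ≤ b := fun u => le_min (hcB u) (hc1 u)
        have hbB : b ^ α ≤ B ^ α := Real.rpow_le_rpow hb0.le (min_le_left _ _) hα0.le
        have h2π : 0 < 2 * Real.pi := by positivity
        have step1 : (1 + |s| ^ (1+α)) * |Tf s|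
            ≤ (1 + |s| ^ (1+α)) * |∫ ξ : ℝ, h s ξ| := by
          simp only [hTfdef]
          rw [abs_mul]
          have hle : |1/(2*Real.pi)| ≤ 1 := by
            rw [abs_of_pos (by positivity), div_le_one h2π]
            linarith [Real.pi_gt_three]
          nlinarith [mul_nonneg (mul_nonneg (hwpos s).le
            (abs_nonneg (∫ ξ : ℝ, h s ξ))) (sub_nonneg.2 hle)]
        have step2 : (1 + |s| ^ (1+α)) * |∫ ξ : ℝ, h s ξ|
            = |∫ ξ : ℝ, (1 + |s| ^ (1+α)) * h s ξ| := by
          rw [MeasureTheory.integral_const_mul, abs_mul, abs_of_pos (hwpos s)]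
        have step3 : |∫ ξ : ℝ, (1 + |s| ^ (1+α)) * h s ξ|
            ≤ ∫ ξ : ℝ, M * (Qmaj α b |ξ| + 4 * b ^ α * (1 + |s - ξ| ^ (1+α))⁻¹) := by
          rw [← Real.norm_eq_abs]
          apply MeasureTheory.norm_integral_le_of_norm_le (Gint b hb0 hb1 s)
          filter_upwards [hae0] with ξ hξ
          rw [Real.norm_eq_abs, abs_mul, abs_of_pos (hwpos s)]
          exact key b hb0 hb1 hcb s ξ hξ
        have step4 := Gval b hb0 hb1 s
        have final : M * (b ^ α * C) ≤ C * B ^ α * M := by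
          have h1 : M * (b ^ α * C) ≤ M * (B ^ α * C) := by
            apply mul_le_mul_of_nonneg_left _ hM0
            exact mul_le_mul_of_nonneg_right hbB hC0
          linarith [h1, (by ring : M * (B ^ α * C) = C * B ^ α * M)]
        exact ((step1.trans_eq step2).trans step3).trans (step4.trans final)
    rw [wSup]
    apply iSup_le
    intro s
    calc ENNReal.ofReal ((1 + |s| ^ (1 + α)) * |Tf s|)
        ≤ ENNReal.ofReal (C * B ^ α * M) := ENNReal.ofReal_le_ofReal (main s)
      _ = ENNReal.ofReal (C * B ^ α) * ENNReal.ofReal M := by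
          rw [← ENNReal.ofReal_mul (by positivity)]
      _ ≤ ENNReal.ofReal (C * B ^ α) * N := by
          rw [hMdef, ENNReal.ofReal_toReal hNtop]
end
end

section
/- For every 0<α<1 there exists a constant C=C(α)>1 such that the following holds. Let β∈ℝ, T>0, and z(s,t)=βs+z̃(s,t) with z̃∈C([0,T];C^{1,α}(ℝ)). Define I(s,t) := PV∫_ℝ ξ/(ξ²+(z(s,t)−z(s−ξ,t))²) dξ, where PV∫_ℝ := lim_{ε→0⁺, R→∞} ∫_{ε≤|ξ|≤R}. Then the principal value exists for every (s,t), the function I is continuous on ℝ×[0,T], and |I(s,t)| ≤ C(‖z̃(·,t)‖_∞ + ‖∂_sz(·,t)‖_{C^α}) for all s,t. -/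
open MeasureTheory Filter Topology Set
open scoped ENNReal

noncomputable section

/-- `Φ̄ = ξ(Φ - Φ^∞)`. -/
def barW (Φ : ℝ → ℝ → ℝ) (Φinf : ℝ → ℝ) (ξ s : ℝ) : ℝ := ξ * (Φ ξ s - Φinf s)

/-- `Φ̃ = ξ∂_ξΦ - Φ`. -/
def tildeW (Φ : ℝ → ℝ → ℝ) (ξ s : ℝ) : ℝ := ξ * deriv (fun ξ' => Φ ξ' s) ξ - Φ ξ s

/-- The weight norm `⦀Φ⦀₀` (relative to the far field `Φinf = Φ^∞`). -/
def WNorm0 (Φ : ℝ → ℝ → ℝ) (Φinf : ℝ → ℝ) : ℝ≥0∞ :=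
  (⨆ s : ℝ, ⨆ ξ : {ξ : ℝ // 0 < |ξ| ∧ |ξ| ≤ 1}, ENNReal.ofReal |Φ ξ.1 s|)
    + ⨆ s : ℝ, ⨆ ξ : {ξ : ℝ // 1 < |ξ|},
        ENNReal.ofReal (|barW Φ Φinf ξ.1 s| + |tildeW Φ ξ.1 s|)

/-- Membership `Φ ∈ W⁰`, with far field `Φinf`. -/
def MemW0 (Φ : ℝ → ℝ → ℝ) (Φinf : ℝ → ℝ) : Prop :=
  (∀ s, ContDiffOn ℝ 1 (fun ξ => Φ ξ s) {(0 : ℝ)}ᶜ) ∧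
  (∀ s, Tendsto (fun ξ => Φ ξ s) (cocompact ℝ) (𝓝 (Φinf s))) ∧
  WNorm0 Φ Φinf < ⊤

/-- Ordinary Hölder seminorm in one variable (with value in `ℝ≥0∞`). -/
def holderS (α : ℝ) (g : ℝ → ℝ) : ℝ≥0∞ :=
  ⨆ p : ℝ × ℝ, ENNReal.ofReal (|g p.1 - g p.2| / |p.1 - p.2| ^ α)

/-- Hölder seminorm jointly in the two variables `(ξ,s)`. -/
def holderJoint (α : ℝ) (G : ℝ → ℝ → ℝ) : ℝ≥0∞ :=
  ⨆ p : (ℝ × ℝ) × ℝ × ℝ,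
    ENNReal.ofReal (|G p.1.1 p.1.2 - G p.2.1 p.2.2| / dist p.1 p.2 ^ α)

/-- The weight norm `⦀Φ⦀_{k,α}`. -/
def WNormK (α : ℝ) (k : ℕ) (Φ : ℝ → ℝ → ℝ) (Φinf : ℝ → ℝ) : ℝ≥0∞ :=
  (⨆ j : Fin (k + 1),
      WNorm0 (fun ξ s => iteratedDeriv j.1 (Φ ξ) s) (iteratedDeriv j.1 Φinf))
    + holderJoint α (fun ξ s => iteratedDeriv k (Φ ξ) s)
    + ⨆ ξ : {ξ : ℝ // 1 < |ξ|},
        (holderS α (fun s => iteratedDeriv k (fun s' => barW Φ Φinf ξ.1 s') s)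
          + holderS α (fun s => iteratedDeriv k (fun s' => tildeW Φ ξ.1 s') s))

/-- Membership `Φ ∈ W^{k,α}`, with far field `Φinf`. -/
def MemWK (α : ℝ) (k : ℕ) (Φ : ℝ → ℝ → ℝ) (Φinf : ℝ → ℝ) : Prop :=
  MemW0 Φ Φinf ∧ (∀ ξ : ℝ, ξ ≠ 0 → ContDiff ℝ k (Φ ξ)) ∧ WNormK α k Φ Φinf < ⊤

/-- Ordinary (unweighted) Hölder norm `‖f‖_{C^{k,α}}` with values in `ℝ≥0∞`. -/
def hNorm (α : ℝ) (k : ℕ) (f : ℝ → ℝ) : ℝ≥0∞ :=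
  (⨆ s : ℝ, ⨆ j : Fin (k + 1), ENNReal.ofReal |iteratedDeriv j.1 f s|)
    + holderS α (iteratedDeriv k f)

namespace IKB



/-- The integrand. -/
def Ff (z : ℝ → ℝ) (s ξ : ℝ) : ℝ := ξ / (ξ ^ 2 + (z s - z (s - ξ)) ^ 2)

/-- Symmetrized integrand. -/
def gf (z : ℝ → ℝ) (s ξ : ℝ) : ℝ := Ff z s ξ + Ff z s (-ξ)

/-- Dominating function. -/
def Df (α A H ξ : ℝ) : ℝ := if ξ ≤ 1 then 2 * H * ξ ^ (α - 1) else 4 * A * ξ ^ (-2 : ℝ)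

lemma gf_abs_le (z : ℝ → ℝ) (s ξ : ℝ) (hξ : ξ ≠ 0) :
    |gf z s ξ| ≤ |z (s + ξ) + z (s - ξ) - 2 * z s| / ξ ^ 2 := by
  have h1 : s - -ξ = s + ξ := by ring
  set d1 : ℝ := z s - z (s - ξ) with hd1
  set d2 : ℝ := z (s + ξ) - z s with hd2
  have hp : 0 < ξ ^ 2 + d1 ^ 2 := by positivity
  have hq : 0 < ξ ^ 2 + d2 ^ 2 := by positivity
  have hgf : gf z s ξ = ξ * (d2 ^ 2 - d1 ^ 2) / ((ξ ^ 2 + d1 ^ 2) * (ξ ^ 2 + d2 ^ 2)) := by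
    simp only [gf, Ff, h1, ← hd1, ← hd2]
    have : z s - z (s + ξ) = -d2 := by rw [hd2]; ring
    rw [this]
    field_simp
    ring
  have hsd : z (s + ξ) + z (s - ξ) - 2 * z s = d2 - d1 := by rw [hd1, hd2]; ring
  rw [hgf, hsd, abs_div]
  rw [div_le_div_iff₀ (by positivity) (by positivity)]
  have key : |ξ| * |d2 + d1| * ξ ^ 2 ≤ (ξ ^ 2 + d1 ^ 2) * (ξ ^ 2 + d2 ^ 2) := by
    have hx : 0 < |ξ| := abs_pos.mpr hξ
    have e2 : ξ ^ 2 = |ξ| ^ 2 := (sq_abs ξ).symm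
    have h2 : |d2 + d1| ≤ |d2| + |d1| := abs_add_le _ _
    have key2 : |ξ| * (|d2| + |d1|) * |ξ| ^ 2 ≤ (|ξ| ^ 2 + d1 ^ 2) * (|ξ| ^ 2 + d2 ^ 2) := by
      have hd1a : d1 ^ 2 = |d1| ^ 2 := (sq_abs d1).symm
      have hd2a : d2 ^ 2 = |d2| ^ 2 := (sq_abs d2).symm
      rw [hd1a, hd2a]
      nlinarith [sq_nonneg (|ξ| - |d1|), sq_nonneg (|ξ| - |d2|), abs_nonneg d1, abs_nonneg d2,
        sq_nonneg (|ξ| * |d1| - |ξ| * |d2|), mul_nonneg (abs_nonneg d1) (abs_nonneg d2),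
        sq_nonneg (|d1| * |d2|)]
    calc |ξ| * |d2 + d1| * ξ ^ 2 ≤ |ξ| * (|d2| + |d1|) * ξ ^ 2 := by
          apply mul_le_mul_of_nonneg_right _ (sq_nonneg ξ)
          exact mul_le_mul_of_nonneg_left h2 (le_of_lt hx)
      _ = |ξ| * (|d2| + |d1|) * |ξ| ^ 2 := by rw [e2]
      _ ≤ (|ξ| ^ 2 + d1 ^ 2) * (|ξ| ^ 2 + d2 ^ 2) := key2
      _ = (ξ ^ 2 + d1 ^ 2) * (ξ ^ 2 + d2 ^ 2) := by rw [e2]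
  calc |ξ * (d2 ^ 2 - d1 ^ 2)| * ξ ^ 2 = |ξ| * |d2 - d1| * |d2 + d1| * ξ ^ 2 := by
        rw [abs_mul]
        have : d2 ^ 2 - d1 ^ 2 = (d2 - d1) * (d2 + d1) := by ring
        rw [this, abs_mul]; ring
    _ = |d2 - d1| * (|ξ| * |d2 + d1| * ξ ^ 2) := by ring
    _ ≤ |d2 - d1| * ((ξ ^ 2 + d1 ^ 2) * (ξ ^ 2 + d2 ^ 2)) :=
        mul_le_mul_of_nonneg_left key (abs_nonneg _)
    _ = |d2 - d1| * |(ξ ^ 2 + d1 ^ 2) * (ξ ^ 2 + d2 ^ 2)| := by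
        rw [abs_of_pos (mul_pos hp hq)]



lemma H_nonneg {α H : ℝ} (d : ℝ → ℝ) (hH : ∀ x y, |d x - d y| ≤ H * |x - y| ^ α) : 0 ≤ H := by
  have h := hH 1 0
  simp at h
  nlinarith [abs_nonneg (d 1 - d 0)]

lemma secdiff_le {α H : ℝ} (hα0 : 0 < α) (hα1 : α ≤ 1) {z : ℝ → ℝ} (hz : Differentiable ℝ z)
    (hH : ∀ x y, |deriv z x - deriv z y| ≤ H * |x - y| ^ α) (s : ℝ) {ξ : ℝ} (hξ : 0 < ξ) :
    |z (s + ξ) + z (s - ξ) - 2 * z s| ≤ 2 * H * ξ ^ α * ξ := by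
  have hH0 : 0 ≤ H := H_nonneg (deriv z) hH
  obtain ⟨c₁, hc₁, he₁⟩ := exists_hasDerivAt_eq_slope z (deriv z) (by linarith : s < s + ξ)
    (hz.continuous.continuousOn) (fun x _ => (hz x).hasDerivAt)
  obtain ⟨c₂, hc₂, he₂⟩ := exists_hasDerivAt_eq_slope z (deriv z) (by linarith : s - ξ < s)
    (hz.continuous.continuousOn) (fun x _ => (hz x).hasDerivAt)
  have hsum : z (s + ξ) + z (s - ξ) - 2 * z s = (deriv z c₁ - deriv z c₂) * ξ := by
    rw [he₁, he₂]
    have h1 : s + ξ - s = ξ := by ring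
    have h2 : s - (s - ξ) = ξ := by ring
    rw [h1, h2]
    field_simp; ring
  rw [hsum, abs_mul, abs_of_pos hξ]
  have hcc : |c₁ - c₂| ≤ 2 * ξ := by
    rw [abs_of_pos (by cases hc₁; cases hc₂; linarith : (0:ℝ) < c₁ - c₂)]
    cases hc₁; cases hc₂; linarith
  have h1 : |deriv z c₁ - deriv z c₂| ≤ H * |c₁ - c₂| ^ α := hH c₁ c₂
  have h2 : |c₁ - c₂| ^ α ≤ (2 * ξ) ^ α :=
    Real.rpow_le_rpow (abs_nonneg _) hcc (le_of_lt hα0)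
  have h3 : (2 * ξ) ^ α = 2 ^ α * ξ ^ α := Real.mul_rpow (by norm_num) (le_of_lt hξ)
  have h4 : (2:ℝ) ^ α ≤ 2 := by
    calc (2:ℝ) ^ α ≤ 2 ^ (1:ℝ) := Real.rpow_le_rpow_of_exponent_le (by norm_num) hα1
      _ = 2 := Real.rpow_one 2
  have h5 : |deriv z c₁ - deriv z c₂| ≤ 2 * H * ξ ^ α := by
    calc |deriv z c₁ - deriv z c₂| ≤ H * |c₁ - c₂| ^ α := h1
      _ ≤ H * ((2:ℝ) ^ α * ξ ^ α) := by rw [← h3]; exact mul_le_mul_of_nonneg_left h2 hH0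
      _ ≤ H * (2 * ξ ^ α) := by
          apply mul_le_mul_of_nonneg_left _ hH0
          exact mul_le_mul_of_nonneg_right h4 (Real.rpow_nonneg (le_of_lt hξ) α)
      _ = 2 * H * ξ ^ α := by ring
  exact mul_le_mul_of_nonneg_right h5 (le_of_lt hξ)




lemma rpow_integrableOn_Ioc {r : ℝ} (hr : -1 < r) {a b : ℝ} (hab : a ≤ b) :
    IntegrableOn (fun ξ : ℝ => ξ ^ r) (Ioc a b) :=
  (intervalIntegrable_iff_integrableOn_Ioc_of_le hab).mp
    (intervalIntegral.intervalIntegrable_rpow' hr)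

lemma integral_rpow_Ioc {α : ℝ} (hα0 : 0 < α) {ε : ℝ} (hε : 0 ≤ ε) :
    ∫ ξ in Ioc 0 ε, ξ ^ (α - 1) = ε ^ α / α := by
  rw [← intervalIntegral.integral_of_le hε, integral_rpow (Or.inl (by linarith)),
    Real.zero_rpow (by linarith : α - 1 + 1 ≠ 0)]
  norm_num

lemma integral_rpow_Ioi {R : ℝ} (hR : 0 < R) :
    ∫ ξ in Ioi R, ξ ^ (-2 : ℝ) = R⁻¹ := by
  rw [integral_Ioi_rpow_of_lt (by norm_num) hR]
  norm_num
  rw [Real.rpow_neg_one]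

lemma Df_Ioc_int {α A H : ℝ} (hα0 : 0 < α) : IntegrableOn (Df α A H) (Ioc 0 1) := by
  apply IntegrableOn.congr_fun ((rpow_integrableOn_Ioc (r := α - 1) (by linarith) zero_le_one).const_mul (2*H))
  · intro ξ hξ; simp only [Df, if_pos hξ.2]
  · exact measurableSet_Ioc

lemma Df_Ioi_int {α A H : ℝ} : IntegrableOn (Df α A H) (Ioi 1) := by
  apply IntegrableOn.congr_fun
    ((integrableOn_Ioi_rpow_of_lt (a := -2) (by norm_num) one_pos).const_mul (4*A))
  · intro ξ hξ; simp only [Df, if_neg (not_le.mpr (mem_Ioi.mp hξ))]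
  · exact measurableSet_Ioi

lemma Df_integrableOn {α A H : ℝ} (hα0 : 0 < α) : IntegrableOn (Df α A H) (Ioi 0) := by
  rw [← Ioc_union_Ioi_eq_Ioi (zero_le_one)]
  exact (Df_Ioc_int hα0).union Df_Ioi_int

lemma Df_integral {α A H : ℝ} (hα0 : 0 < α) :
    ∫ ξ in Ioi 0, Df α A H ξ = 2 * H / α + 4 * A := by
  rw [← Ioc_union_Ioi_eq_Ioi (zero_le_one : (0:ℝ) ≤ 1),
    setIntegral_union (by simp [disjoint_left]) measurableSet_Ioi (Df_Ioc_int hα0) Df_Ioi_int]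
  have e1 : ∫ ξ in Ioc (0:ℝ) 1, Df α A H ξ = 2 * H / α := by
    rw [setIntegral_congr_fun measurableSet_Ioc
      (fun ξ hξ => by simp only [Df, if_pos hξ.2] :
        EqOn (Df α A H) (fun ξ => 2 * H * ξ ^ (α - 1)) (Ioc 0 1)),
      integral_const_mul, integral_rpow_Ioc hα0 zero_le_one, Real.one_rpow]
    ring
  have e2 : ∫ ξ in Ioi (1:ℝ), Df α A H ξ = 4 * A := by
    rw [setIntegral_congr_fun measurableSet_Ioi
      (fun ξ hξ => by simp only [Df, if_neg (not_le.mpr (mem_Ioi.mp hξ))] :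
        EqOn (Df α A H) (fun ξ => 4 * A * ξ ^ (-2:ℝ)) (Ioi 1)),
      integral_const_mul, integral_rpow_Ioi one_pos]
    norm_num
  rw [e1, e2]


lemma Df_nonneg {α A H : ℝ} (hA : 0 ≤ A) (hH : 0 ≤ H) {ξ : ℝ} (hξ : 0 < ξ) :
    0 ≤ Df α A H ξ := by
  unfold Df; split <;> positivity

lemma gf_le_Df {α A H : ℝ} (hα0 : 0 < α) (hα1 : α ≤ 1) {z : ℝ → ℝ} (hz : Differentiable ℝ z)
    (hH : ∀ x y, |deriv z x - deriv z y| ≤ H * |x - y| ^ α)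
    (hsec : ∀ s ξ, |z (s + ξ) + z (s - ξ) - 2 * z s| ≤ 4 * A)
    (s : ℝ) {ξ : ℝ} (hξ : 0 < ξ) : |gf z s ξ| ≤ Df α A H ξ := by
  have hne : ξ ≠ 0 := ne_of_gt hξ
  have h0 := gf_abs_le z s ξ hne
  unfold Df
  split
  · rename_i h1
    have h2 := secdiff_le hα0 hα1 hz hH s hξ
    calc |gf z s ξ| ≤ |z (s + ξ) + z (s - ξ) - 2 * z s| / ξ ^ 2 := h0
      _ ≤ 2 * H * ξ ^ α * ξ / ξ ^ 2 := by
          exact div_le_div_of_nonneg_right h2 (by positivity) |>.trans_eq rfl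
      _ = 2 * H * ξ ^ (α - 1) := by
          rw [Real.rpow_sub hξ, Real.rpow_one, sq]
          field_simp
  · rename_i h1
    calc |gf z s ξ| ≤ |z (s + ξ) + z (s - ξ) - 2 * z s| / ξ ^ 2 := h0
      _ ≤ 4 * A / ξ ^ 2 := div_le_div_of_nonneg_right (hsec s ξ) (by positivity)
      _ = 4 * A * ξ ^ (-2 : ℝ) := by
          have h2 : ξ ^ (-2 : ℝ) = (ξ ^ 2)⁻¹ := by
            rw [show (-2:ℝ) = -((2:ℕ):ℝ) by norm_num, Real.rpow_neg (le_of_lt hξ),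
              Real.rpow_natCast]
          rw [h2, div_eq_mul_inv]

lemma Ff_contOn {z : ℝ → ℝ} (hz : Continuous z) (s : ℝ) :
    ContinuousOn (fun ξ => Ff z s ξ) {ξ : ℝ | ξ ≠ 0} := by
  apply ContinuousOn.div continuousOn_id
  · exact Continuous.continuousOn (by fun_prop)
  · intro ξ hξ
    have hne : ξ ≠ 0 := hξ
    have h2 : (0:ℝ) < ξ ^ 2 := lt_of_le_of_ne (sq_nonneg ξ) (Ne.symm (pow_ne_zero 2 hne))
    nlinarith [sq_nonneg (z s - z (s - ξ))]

lemma gf_contOn {z : ℝ → ℝ} (hz : Continuous z) (s : ℝ) :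
    ContinuousOn (gf z s) {ξ : ℝ | ξ ≠ 0} := by
  apply (Ff_contOn hz s).add
  exact (Ff_contOn hz s).comp continuous_neg.continuousOn
    (fun ξ hξ => by simpa using (hξ : ξ ≠ 0))

lemma gf_meas {z : ℝ → ℝ} (hz : Continuous z) (s : ℝ) {u : Set ℝ}
    (hu : MeasurableSet u) (hsub : u ⊆ {ξ : ℝ | ξ ≠ 0}) :
    AEStronglyMeasurable (gf z s) (volume.restrict u) :=
  ((gf_contOn hz s).mono hsub).aestronglyMeasurable hu

lemma Ioi_sub : (Ioi (0:ℝ)) ⊆ {ξ : ℝ | ξ ≠ 0} := fun ξ hξ => ne_of_gt hξ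

lemma gf_integrableOn {α A H : ℝ} (hα0 : 0 < α) (hα1 : α ≤ 1) {z : ℝ → ℝ}
    (hz : Differentiable ℝ z)
    (hH : ∀ x y, |deriv z x - deriv z y| ≤ H * |x - y| ^ α)
    (hsec : ∀ s ξ, |z (s + ξ) + z (s - ξ) - 2 * z s| ≤ 4 * A) (s : ℝ) :
    IntegrableOn (gf z s) (Ioi 0) := by
  apply (Df_integrableOn hα0).mono' (gf_meas hz.continuous s measurableSet_Ioi Ioi_sub)
  rw [ae_restrict_iff' measurableSet_Ioi]
  exact ae_of_all _ fun ξ hξ => by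
    rw [Real.norm_eq_abs]; exact gf_le_Df hα0 hα1 hz hH hsec s hξ

lemma gf_integral_bound {α A H : ℝ} (hα0 : 0 < α) (hα1 : α ≤ 1) {z : ℝ → ℝ}
    (hz : Differentiable ℝ z)
    (hH : ∀ x y, |deriv z x - deriv z y| ≤ H * |x - y| ^ α)
    (hsec : ∀ s ξ, |z (s + ξ) + z (s - ξ) - 2 * z s| ≤ 4 * A) (s : ℝ) :
    |∫ ξ in Ioi (0:ℝ), gf z s ξ| ≤ 2 * H / α + 4 * A := by
  rw [← Df_integral (A := A) (H := H) hα0, ← Real.norm_eq_abs]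
  apply norm_integral_le_of_norm_le (Df_integrableOn hα0)
  rw [ae_restrict_iff' measurableSet_Ioi]
  exact ae_of_all _ fun ξ hξ => by
    rw [Real.norm_eq_abs]; exact gf_le_Df hα0 hα1 hz hH hsec s hξ

lemma gf_tail_small {α A H : ℝ} (hα0 : 0 < α) (hα1 : α ≤ 1) {z : ℝ → ℝ}
    (hz : Differentiable ℝ z)
    (hH : ∀ x y, |deriv z x - deriv z y| ≤ H * |x - y| ^ α)
    (hsec : ∀ s ξ, |z (s + ξ) + z (s - ξ) - 2 * z s| ≤ 4 * A) (s : ℝ)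
    {ε : ℝ} (hε : 0 < ε) (hε1 : ε ≤ 1) :
    |∫ ξ in Ioc (0:ℝ) ε, gf z s ξ| ≤ 2 * H * ε ^ α / α := by
  have hint : IntegrableOn (fun ξ : ℝ => 2 * H * ξ ^ (α - 1)) (Ioc 0 ε) :=
    (rpow_integrableOn_Ioc (r := α - 1) (by linarith) (le_of_lt hε)).const_mul (2*H)
  have hb : |∫ ξ in Ioc (0:ℝ) ε, gf z s ξ| ≤ ∫ ξ in Ioc (0:ℝ) ε, 2 * H * ξ ^ (α - 1) := by
    rw [← Real.norm_eq_abs]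
    apply norm_integral_le_of_norm_le hint
    rw [ae_restrict_iff' measurableSet_Ioc]
    refine ae_of_all _ fun ξ hξ => ?_
    rw [Real.norm_eq_abs]
    have := gf_le_Df (A := A) hα0 hα1 hz hH hsec s hξ.1
    rwa [Df, if_pos (hξ.2.trans hε1)] at this
  calc |∫ ξ in Ioc (0:ℝ) ε, gf z s ξ| ≤ ∫ ξ in Ioc (0:ℝ) ε, 2 * H * ξ ^ (α - 1) := hb
    _ = 2 * H * ε ^ α / α := by
        rw [integral_const_mul, integral_rpow_Ioc hα0 (le_of_lt hε)]; ring

lemma gf_tail_large {α A H : ℝ} (hα0 : 0 < α) (hα1 : α ≤ 1) {z : ℝ → ℝ}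
    (hz : Differentiable ℝ z)
    (hH : ∀ x y, |deriv z x - deriv z y| ≤ H * |x - y| ^ α)
    (hsec : ∀ s ξ, |z (s + ξ) + z (s - ξ) - 2 * z s| ≤ 4 * A) (s : ℝ)
    {R : ℝ} (hR : 1 ≤ R) :
    |∫ ξ in Ioi R, gf z s ξ| ≤ 4 * A / R := by
  have hR0 : (0:ℝ) < R := lt_of_lt_of_le one_pos hR
  have hint : IntegrableOn (fun ξ : ℝ => 4 * A * ξ ^ (-2:ℝ)) (Ioi R) :=
    (integrableOn_Ioi_rpow_of_lt (a := -2) (by norm_num) hR0).const_mul (4*A)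
  have hb : |∫ ξ in Ioi R, gf z s ξ| ≤ ∫ ξ in Ioi R, 4 * A * ξ ^ (-2:ℝ) := by
    rw [← Real.norm_eq_abs]
    apply norm_integral_le_of_norm_le hint
    rw [ae_restrict_iff' measurableSet_Ioi]
    refine ae_of_all _ fun ξ hξ => ?_
    rw [Real.norm_eq_abs]
    have hξ0 : 0 < ξ := lt_trans hR0 hξ
    have := gf_le_Df (A := A) hα0 hα1 hz hH hsec s hξ0
    rwa [Df, if_neg (not_le.mpr (lt_of_le_of_lt hR hξ))] at this
  calc |∫ ξ in Ioi R, gf z s ξ| ≤ ∫ ξ in Ioi R, 4 * A * ξ ^ (-2:ℝ) := hb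
    _ = 4 * A / R := by rw [integral_const_mul, integral_rpow_Ioi hR0, div_eq_mul_inv]

lemma sym_set {ε R : ℝ} (hε : 0 < ε) :
    {ξ : ℝ | ε ≤ |ξ| ∧ |ξ| ≤ R} = Icc (-R) (-ε) ∪ Icc ε R := by
  ext ξ
  rcases le_or_gt 0 ξ with h | h
  · rw [mem_setOf_eq, abs_of_nonneg h]
    constructor
    · rintro ⟨h1, h2⟩; right; exact ⟨h1, h2⟩
    · rintro (⟨h1, h2⟩ | ⟨h1, h2⟩) <;> constructor <;> linarith
  · rw [mem_setOf_eq, abs_of_neg h]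
    constructor
    · rintro ⟨h1, h2⟩; left; constructor <;> linarith
    · rintro (⟨h1, h2⟩ | ⟨h1, h2⟩) <;> constructor <;> linarith

lemma Ff_int_Icc {z : ℝ → ℝ} (hz : Continuous z) (s : ℝ) {a b : ℝ}
    (hab : (0:ℝ) ∉ Icc a b) : IntegrableOn (fun ξ => Ff z s ξ) (Icc a b) :=
  ((Ff_contOn hz s).mono (fun ξ hξ hc => hab (hc ▸ hξ))).integrableOn_Icc

lemma sym_integral {z : ℝ → ℝ} (hz : Continuous z) (s : ℝ) {ε R : ℝ}
    (hε : 0 < ε) (hεR : ε ≤ R) :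
    ∫ ξ in {ξ : ℝ | ε ≤ |ξ| ∧ |ξ| ≤ R}, Ff z s ξ = ∫ ξ in Ioc ε R, gf z s ξ := by
  have hnot1 : (0:ℝ) ∉ Icc (-R) (-ε) := by intro h; rcases h with ⟨_, h2⟩; linarith
  have hnot2 : (0:ℝ) ∉ Icc ε R := by intro h; rcases h with ⟨h1, _⟩; linarith
  have hi1 : IntegrableOn (fun ξ => Ff z s ξ) (Icc (-R) (-ε)) := Ff_int_Icc hz s hnot1
  have hi2 : IntegrableOn (fun ξ => Ff z s ξ) (Icc ε R) := Ff_int_Icc hz s hnot2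
  have hdisj : Disjoint (Icc (-R) (-ε)) (Icc ε R) := by
    rw [Set.disjoint_left]
    rintro x ⟨_, h1⟩ ⟨h2, _⟩
    linarith
  rw [sym_set hε, setIntegral_union hdisj measurableSet_Icc hi1 hi2]
  have e1 : ∫ ξ in Icc (-R) (-ε), Ff z s ξ = ∫ ξ in ε..R, Ff z s (-ξ) := by
    rw [intervalIntegral.integral_comp_neg (fun ξ => Ff z s ξ),
      integral_Icc_eq_integral_Ioc, ← intervalIntegral.integral_of_le (by linarith : -R ≤ -ε)]
  have e2 : ∫ ξ in Icc ε R, Ff z s ξ = ∫ ξ in ε..R, Ff z s ξ := by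
    rw [integral_Icc_eq_integral_Ioc, ← intervalIntegral.integral_of_le hεR]
  rw [e1, e2, ← intervalIntegral.integral_add]
  · rw [intervalIntegral.integral_of_le hεR]
    apply setIntegral_congr_fun measurableSet_Ioc
    intro ξ _
    simp only [gf]
    ring
  · rw [intervalIntegrable_iff_integrableOn_Ioc_of_le hεR]
    apply IntegrableOn.mono_set _ Ioc_subset_Icc_self
    apply ContinuousOn.integrableOn_Icc
    apply (Ff_contOn hz s).comp continuous_neg.continuousOn
    intro ξ hξ
    have : (0:ℝ) < ξ := lt_of_lt_of_le hε hξ.1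
    simp only [mem_setOf_eq]
    intro hc
    rw [neg_eq_zero] at hc
    linarith
  · rw [intervalIntegrable_iff_integrableOn_Ioc_of_le hεR]
    exact hi2.mono_set Ioc_subset_Icc_self

lemma decomp_integral {α A H : ℝ} (hα0 : 0 < α) (hα1 : α ≤ 1) {z : ℝ → ℝ}
    (hz : Differentiable ℝ z)
    (hH : ∀ x y, |deriv z x - deriv z y| ≤ H * |x - y| ^ α)
    (hsec : ∀ s ξ, |z (s + ξ) + z (s - ξ) - 2 * z s| ≤ 4 * A) (s : ℝ)
    {ε R : ℝ} (hε : 0 < ε) (hεR : ε ≤ R) :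
    ∫ ξ in Ioi (0:ℝ), gf z s ξ =
      (∫ ξ in Ioc 0 ε, gf z s ξ) + (∫ ξ in Ioc ε R, gf z s ξ) + ∫ ξ in Ioi R, gf z s ξ := by
  have hint := gf_integrableOn hα0 hα1 hz hH hsec s
  have h1 : Ioc ε R ∪ Ioi R = Ioi ε := Ioc_union_Ioi_eq_Ioi hεR
  have h2 : Ioc 0 ε ∪ Ioi ε = Ioi 0 := Ioc_union_Ioi_eq_Ioi (le_of_lt hε)
  have hiε : Ioi ε ⊆ Ioi (0:ℝ) := Ioi_subset_Ioi (le_of_lt hε)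
  rw [← h2, setIntegral_union (by simp [disjoint_left]) measurableSet_Ioi
    (hint.mono_set (by rw [← h2]; exact subset_union_left)) (hint.mono_set (by rw [← h2]; exact subset_union_right)),
    ← h1, setIntegral_union (by simp [disjoint_left]) measurableSet_Ioi
    (hint.mono_set ((subset_union_left.trans h1.subset).trans hiε))
    (hint.mono_set ((subset_union_right.trans h1.subset).trans hiε)), add_assoc]

lemma pv_tendsto {α A H : ℝ} (hα0 : 0 < α) (hα1 : α ≤ 1) {z : ℝ → ℝ}
    (hz : Differentiable ℝ z)
    (hH : ∀ x y, |deriv z x - deriv z y| ≤ H * |x - y| ^ α)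
    (hsec : ∀ s ξ, |z (s + ξ) + z (s - ξ) - 2 * z s| ≤ 4 * A) (s : ℝ) :
    Tendsto (fun q : ℝ × ℝ => ∫ ξ in {ξ : ℝ | q.1 ≤ |ξ| ∧ |ξ| ≤ q.2}, Ff z s ξ)
      ((𝓝[>] (0:ℝ)) ×ˢ (atTop : Filter ℝ)) (𝓝 (∫ ξ in Ioi (0:ℝ), gf z s ξ)) := by
  have hH0 : 0 ≤ H := H_nonneg (deriv z) hH
  have hA0 : 0 ≤ A := by
    have := hsec 0 0
    have h0 := abs_nonneg (z (0+0) + z (0-0) - 2 * z 0)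
    linarith
  rw [tendsto_iff_dist_tendsto_zero]
  have hev : ∀ᶠ q : ℝ × ℝ in (𝓝[>] (0:ℝ)) ×ˢ (atTop : Filter ℝ),
      (q.1 ∈ Ioc (0:ℝ) 1) ∧ (1:ℝ) ≤ q.2 :=
    Eventually.prod_mk (Ioc_mem_nhdsGT_of_mem (by norm_num : (0:ℝ) ∈ Ico (0:ℝ) 1))
      (eventually_ge_atTop 1)
  apply squeeze_zero' (hev.mono fun q _ => dist_nonneg)
    (g := fun q : ℝ × ℝ => 2 * H * q.1 ^ α / α + 4 * A / q.2)
  · refine hev.mono fun q hq => ?_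
    obtain ⟨⟨hq1, hq2⟩, hq3⟩ := hq
    have hεR : q.1 ≤ q.2 := hq2.trans hq3
    rw [Real.dist_eq, sym_integral hz.continuous s hq1 hεR,
      decomp_integral hα0 hα1 hz hH hsec s hq1 hεR]
    rw [show (∫ ξ in Ioc q.1 q.2, gf z s ξ) -
        ((∫ ξ in Ioc (0:ℝ) q.1, gf z s ξ) + (∫ ξ in Ioc q.1 q.2, gf z s ξ) +
          (∫ ξ in Ioi q.2, gf z s ξ))
        = -((∫ ξ in Ioc (0:ℝ) q.1, gf z s ξ) + (∫ ξ in Ioi q.2, gf z s ξ)) by ring, abs_neg]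
    calc |(∫ ξ in Ioc (0:ℝ) q.1, gf z s ξ) + (∫ ξ in Ioi q.2, gf z s ξ)|
        ≤ |∫ ξ in Ioc (0:ℝ) q.1, gf z s ξ| + |∫ ξ in Ioi q.2, gf z s ξ| := abs_add_le _ _
      _ ≤ 2 * H * q.1 ^ α / α + 4 * A / q.2 :=
          add_le_add (gf_tail_small hα0 hα1 hz hH hsec s hq1 hq2)
            (gf_tail_large hα0 hα1 hz hH hsec s hq3)
  · have t1 : Tendsto (fun ε : ℝ => 2 * H * ε ^ α / α) (𝓝[>] (0:ℝ)) (𝓝 0) := by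
      have hc : Tendsto (fun ε : ℝ => ε ^ α) (𝓝 (0:ℝ)) (𝓝 ((0:ℝ) ^ α)) :=
        (Real.continuousAt_rpow_const 0 α (Or.inr (le_of_lt hα0))).tendsto
      rw [Real.zero_rpow (ne_of_gt hα0)] at hc
      have := (hc.const_mul (2 * H)).div_const α
      simpa using this.mono_left nhdsWithin_le_nhds
    have t2 : Tendsto (fun R : ℝ => 4 * A / R) atTop (𝓝 0) := by
      simpa using tendsto_const_nhds.div_atTop (tendsto_id (α := ℝ))
    have := (t1.comp (tendsto_fst (f := 𝓝[>] (0:ℝ)) (g := (atTop : Filter ℝ)))).add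
      (t2.comp tendsto_snd)
    simpa using this

lemma hNorm_sup {α : ℝ} {f : ℝ → ℝ} {M : ℝ≥0∞} (hM : M ≠ ⊤) (h : hNorm α 1 f ≤ M)
    (s : ℝ) : |f s| ≤ M.toReal := by
  have h1 : ENNReal.ofReal |f s| ≤ hNorm α 1 f := by
    refine le_trans ?_ le_self_add
    refine le_trans ?_ (le_iSup _ s)
    refine le_trans ?_ (le_iSup (fun j : Fin 2 => ENNReal.ofReal |iteratedDeriv j.1 f s|) (0 : Fin 2))
    simp [iteratedDeriv_zero]
  exact (ENNReal.ofReal_le_iff_le_toReal hM).mp (h1.trans h)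

lemma hNorm_holder {α : ℝ} (hα0 : 0 < α) {f : ℝ → ℝ} {M : ℝ≥0∞} (hM : M ≠ ⊤) (h : hNorm α 1 f ≤ M)
    (x y : ℝ) : |deriv f x - deriv f y| ≤ M.toReal * |x - y| ^ α := by
  rcases eq_or_ne x y with rfl | hxy
  · simp [Real.zero_rpow (ne_of_gt hα0)]
  have hpos : 0 < |x - y| ^ α := Real.rpow_pos_of_pos (abs_pos.mpr (sub_ne_zero.mpr hxy)) α
  have h1 : ENNReal.ofReal (|deriv f x - deriv f y| / |x - y| ^ α) ≤ hNorm α 1 f := by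
    refine le_trans ?_ le_add_self
    refine le_trans ?_ (le_iSup (fun p : ℝ × ℝ =>
      ENNReal.ofReal (|iteratedDeriv 1 f p.1 - iteratedDeriv 1 f p.2| / |p.1 - p.2| ^ α)) (x, y))
    simp [iteratedDeriv_one]
  have h2 : |deriv f x - deriv f y| / |x - y| ^ α ≤ M.toReal :=
    (ENNReal.ofReal_le_iff_le_toReal hM).mp (h1.trans h)
  calc |deriv f x - deriv f y| = |deriv f x - deriv f y| / |x - y| ^ α * |x - y| ^ α := by
        field_simp
    _ ≤ M.toReal * |x - y| ^ α := mul_le_mul_of_nonneg_right h2 (le_of_lt hpos)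

lemma hNorm_tendsto_unif {α : ℝ} {T : ℝ} {ztil : ℝ → ℝ → ℝ} {t : ℝ}
    (hten : Tendsto (fun t' => hNorm α 1 (fun s => ztil s t' - ztil s t))
      (𝓝[Icc (0 : ℝ) T] t) (𝓝 0)) {ε : ℝ} (hε : 0 < ε) :
    ∀ᶠ t' in 𝓝[Icc (0 : ℝ) T] t, ∀ s, |ztil s t' - ztil s t| ≤ ε := by
  have h := ENNReal.tendsto_nhds_zero.mp hten (ENNReal.ofReal ε) (by simpa using hε)
  refine h.mono fun t' ht' s => ?_
  have := hNorm_sup (M := ENNReal.ofReal ε) ENNReal.ofReal_ne_top ht' s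
  rwa [ENNReal.toReal_ofReal (le_of_lt hε)] at this
lemma ztil_joint_cont {α T : ℝ} {ztil : ℝ → ℝ → ℝ}
    (hyp1 : ∀ t ∈ Icc (0 : ℝ) T, Continuous (fun s => ztil s t))
    (hyp2 : ∀ t ∈ Icc (0 : ℝ) T,
      Tendsto (fun t' => hNorm α 1 (fun s => ztil s t' - ztil s t))
        (𝓝[Icc (0 : ℝ) T] t) (𝓝 0))
    {q₀ : ℝ × ℝ} (hq₀ : q₀.2 ∈ Icc (0 : ℝ) T) :
    ContinuousWithinAt (fun q : ℝ × ℝ => ztil q.1 q.2)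
      {q : ℝ × ℝ | q.2 ∈ Icc (0 : ℝ) T} q₀ := by
  obtain ⟨s₀, t₀⟩ := q₀
  simp only at hq₀
  have hS : {q : ℝ × ℝ | q.2 ∈ Icc (0 : ℝ) T} = (univ : Set ℝ) ×ˢ Icc (0 : ℝ) T := by
    ext q; simp [Set.mem_prod]
  rw [ContinuousWithinAt, Metric.tendsto_nhds]
  intro ε hε
  rw [hS, nhdsWithin_prod_eq, nhdsWithin_univ]
  have ev1 : ∀ᶠ s in 𝓝 s₀, |ztil s t₀ - ztil s₀ t₀| < ε / 2 := by
    have hc : ContinuousAt (fun s => ztil s t₀) s₀ := (hyp1 t₀ hq₀).continuousAt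
    have := Metric.tendsto_nhds.mp hc (ε / 2) (by linarith)
    simpa [Real.dist_eq] using this
  have ev2 : ∀ᶠ t in 𝓝[Icc (0 : ℝ) T] t₀, ∀ s, |ztil s t - ztil s t₀| ≤ ε / 4 :=
    hNorm_tendsto_unif (hyp2 t₀ hq₀) (by linarith)
  refine (Eventually.prod_mk ev1 ev2).mono fun q hq => ?_
  obtain ⟨h1, h2⟩ := hq
  rw [Real.dist_eq]
  calc |ztil q.1 q.2 - ztil s₀ t₀|
      ≤ |ztil q.1 q.2 - ztil q.1 t₀| + |ztil q.1 t₀ - ztil s₀ t₀| := by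
        have := abs_sub_abs_le_abs_sub (ztil q.1 q.2) (ztil s₀ t₀)
        exact abs_sub_le _ _ _
    _ < ε := by have := h2 q.1; linarith

lemma line_diff {β : ℝ} {f : ℝ → ℝ} (hf : ContDiff ℝ 1 f) :
    Differentiable ℝ (fun y => β * y + f y) :=
  (differentiable_id.const_mul β).add (hf.differentiable one_ne_zero)

lemma line_deriv {β : ℝ} {f : ℝ → ℝ} (hf : ContDiff ℝ 1 f) (y : ℝ) :
    deriv (fun y => β * y + f y) y = β + deriv f y := by
  have h : HasDerivAt (fun y => β * y + f y) (β * 1 + deriv f y) y :=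
    ((hasDerivAt_id y).const_mul β).add ((hf.differentiable one_ne_zero) y).hasDerivAt
  simpa using h.deriv

lemma line_holder {α β : ℝ} (hα0 : 0 < α) {f : ℝ → ℝ} (hf : ContDiff ℝ 1 f) {M : ℝ≥0∞}
    (hM : M ≠ ⊤) (h : hNorm α 1 f ≤ M) (x y : ℝ) :
    |deriv (fun y => β * y + f y) x - deriv (fun y => β * y + f y) y|
      ≤ M.toReal * |x - y| ^ α := by
  rw [line_deriv hf, line_deriv hf]
  have e : β + deriv f x - (β + deriv f y) = deriv f x - deriv f y := by ring
  rw [e]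
  exact hNorm_holder hα0 hM h x y

lemma line_sec {β : ℝ} {f : ℝ → ℝ} {A : ℝ} (hA : ∀ s, |f s| ≤ A) (s ξ : ℝ) :
    |(fun y => β * y + f y) (s + ξ) + (fun y => β * y + f y) (s - ξ)
      - 2 * (fun y => β * y + f y) s| ≤ 4 * A := by
  simp only
  have e : β * (s + ξ) + f (s + ξ) + (β * (s - ξ) + f (s - ξ)) - 2 * (β * s + f s)
      = f (s + ξ) + f (s - ξ) - 2 * f s := by ring
  rw [e, abs_le]
  have h1 := abs_le.mp (hA (s + ξ))
  have h2 := abs_le.mp (hA (s - ξ))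
  have h3 := abs_le.mp (hA s)
  constructor <;> [nlinarith; nlinarith]

lemma denom_pos {a : ℝ} (ha : a ≠ 0) (b : ℝ) : 0 < a ^ 2 + b ^ 2 := by
  have h : 0 < a ^ 2 := lt_of_le_of_ne (sq_nonneg a) (Ne.symm (pow_ne_zero 2 ha))
  nlinarith [sq_nonneg b]

lemma I_contOn {α T β : ℝ} (hα0 : 0 < α) (hα1 : α ≤ 1) {ztil : ℝ → ℝ → ℝ} {M : ℝ≥0∞}
    (hMtop : M ≠ ⊤)
    (hyp1 : ∀ t ∈ Icc (0 : ℝ) T, ContDiff ℝ 1 (fun s => ztil s t))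
    (hyp2 : ∀ t ∈ Icc (0 : ℝ) T,
      Tendsto (fun t' => hNorm α 1 (fun s => ztil s t' - ztil s t))
        (𝓝[Icc (0 : ℝ) T] t) (𝓝 0))
    (hypM : ∀ t ∈ Icc (0 : ℝ) T, hNorm α 1 (fun s => ztil s t) ≤ M) :
    ContinuousOn (fun q : ℝ × ℝ => ∫ ξ in Ioi (0:ℝ), gf (fun y => β * y + ztil y q.2) q.1 ξ)
      {q : ℝ × ℝ | q.2 ∈ Icc (0 : ℝ) T} := by
  intro q₀ hq₀
  have hq₀' : q₀.2 ∈ Icc (0 : ℝ) T := hq₀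
  apply continuousWithinAt_of_dominated (bound := Df α M.toReal M.toReal)
  · refine eventually_mem_nhdsWithin.mono fun q hq => ?_
    have hc : Continuous (fun y => β * y + ztil y q.2) :=
      (continuous_const.mul continuous_id).add (hyp1 q.2 hq).continuous
    exact gf_meas hc q.1 measurableSet_Ioi Ioi_sub
  · refine eventually_mem_nhdsWithin.mono fun q hq => ?_
    rw [ae_restrict_iff' measurableSet_Ioi]
    refine ae_of_all _ fun ξ hξ => ?_
    rw [Real.norm_eq_abs]
    exact gf_le_Df hα0 hα1 (line_diff (hyp1 q.2 hq))
      (line_holder hα0 (hyp1 q.2 hq) hMtop (hypM q.2 hq))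
      (line_sec fun s' => hNorm_sup hMtop (hypM q.2 hq) s') q.1 hξ
  · exact Df_integrableOn hα0
  · rw [ae_restrict_iff' measurableSet_Ioi]
    refine ae_of_all _ fun ξ hξ => ?_
    have hξ0 : (0:ℝ) < ξ := hξ
    have hW : ∀ c : ℝ, ContinuousWithinAt
        (fun q : ℝ × ℝ => β * (q.1 + c) + ztil (q.1 + c) q.2)
        {q : ℝ × ℝ | q.2 ∈ Icc (0 : ℝ) T} q₀ := by
      intro c
      have hφ : Continuous (fun q : ℝ × ℝ => (q.1 + c, q.2)) := by fun_prop
      have h1 : ContinuousWithinAt (fun q : ℝ × ℝ => ztil q.1 q.2)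
          {q : ℝ × ℝ | q.2 ∈ Icc (0 : ℝ) T} (q₀.1 + c, q₀.2) :=
        ztil_joint_cont (fun t ht => (hyp1 t ht).continuous) hyp2 hq₀'
      have h2 : ContinuousWithinAt ((fun q : ℝ × ℝ => ztil q.1 q.2) ∘
          (fun q : ℝ × ℝ => (q.1 + c, q.2)))
          {q : ℝ × ℝ | q.2 ∈ Icc (0 : ℝ) T} q₀ :=
        ContinuousWithinAt.comp h1 hφ.continuousWithinAt (fun q hq => hq)
      exact (continuousWithinAt_const.mul
        ((continuous_fst.add continuous_const).continuousWithinAt)).add h2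
    have hW0 : ContinuousWithinAt (fun q : ℝ × ℝ => β * q.1 + ztil q.1 q.2)
        {q : ℝ × ℝ | q.2 ∈ Icc (0 : ℝ) T} q₀ := by
      simpa using hW 0
    have hWm : ContinuousWithinAt (fun q : ℝ × ℝ => β * (q.1 - ξ) + ztil (q.1 - ξ) q.2)
        {q : ℝ × ℝ | q.2 ∈ Icc (0 : ℝ) T} q₀ := by
      simpa [sub_eq_add_neg] using hW (-ξ)
    have hWp : ContinuousWithinAt (fun q : ℝ × ℝ => β * (q.1 + ξ) + ztil (q.1 + ξ) q.2)
        {q : ℝ × ℝ | q.2 ∈ Icc (0 : ℝ) T} q₀ := hW ξ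
    simp only [gf, Ff, sub_neg_eq_add]
    apply ContinuousWithinAt.add
    · apply ContinuousWithinAt.div continuousWithinAt_const
      · exact continuousWithinAt_const.add ((hW0.sub hWm).pow 2)
      · exact ne_of_gt (denom_pos (ne_of_gt hξ0) _)
    · apply ContinuousWithinAt.div continuousWithinAt_const
      · exact continuousWithinAt_const.add ((hW0.sub hWp).pow 2)
      · exact ne_of_gt (denom_pos (neg_ne_zero.mpr (ne_of_gt hξ0)) _)

end IKB

/-- Lemma 3.6: existence, continuity and bound for the principal value
`I(s,t) = PV ∫ ξ/(ξ² + (z(s,t)-z(s-ξ,t))²) dξ`. -/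
theorem I_kernel_bound :
    ∀ α : ℝ, 0 < α → α < 1 →
    ∃ C : ℝ, 1 < C ∧
      ∀ (β T : ℝ) (ztil : ℝ → ℝ → ℝ), 0 < T →
        (∀ t ∈ Icc (0 : ℝ) T, ContDiff ℝ 1 (fun s => ztil s t) ∧
            hNorm α 1 (fun s => ztil s t) < ⊤) →
        (∀ t ∈ Icc (0 : ℝ) T,
            Tendsto (fun t' => hNorm α 1 (fun s => ztil s t' - ztil s t))
              (𝓝[Icc (0 : ℝ) T] t) (𝓝 0)) →
        (∃ M : ℝ≥0∞, M < ⊤ ∧ ∀ t ∈ Icc (0 : ℝ) T, hNorm α 1 (fun s => ztil s t) ≤ M) →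
        ∃ I : ℝ → ℝ → ℝ,
          (∀ s : ℝ, ∀ t ∈ Icc (0 : ℝ) T,
            Tendsto (fun q : ℝ × ℝ =>
                ∫ ξ in {ξ : ℝ | q.1 ≤ |ξ| ∧ |ξ| ≤ q.2},
                  ξ / (ξ ^ 2 + (lineFun2 β ztil s t - lineFun2 β ztil (s - ξ) t) ^ 2))
              ((𝓝[>] (0 : ℝ)) ×ˢ (atTop : Filter ℝ)) (𝓝 (I s t))) ∧
          ContinuousOn (fun q : ℝ × ℝ => I q.1 q.2) {q : ℝ × ℝ | q.2 ∈ Icc (0 : ℝ) T} ∧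
          (∀ s : ℝ, ∀ t ∈ Icc (0 : ℝ) T, ∀ A B H : ℝ,
            (∀ s', |ztil s' t| ≤ A) →
            (∀ s', |deriv (fun y => lineFun2 β ztil y t) s'| ≤ B) →
            (∀ s₁ s₂ : ℝ, |deriv (fun y => lineFun2 β ztil y t) s₁ -
                deriv (fun y => lineFun2 β ztil y t) s₂| ≤ H * |s₁ - s₂| ^ α) →
            |I s t| ≤ C * (A + B + H)) := by
  intro α hα0 hα1
  refine ⟨4 + 2 / α, ?_, ?_⟩
  · have h2 : 0 < 2 / α := by positivity
    linarith
  intro β T ztil hT hyp1 hyp2 hyp3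
  obtain ⟨M, hMlt, hypM⟩ := hyp3
  have hMtop : M ≠ ⊤ := ne_of_lt hMlt
  have hα1' : α ≤ 1 := le_of_lt hα1
  refine ⟨fun s t => ∫ ξ in Ioi (0:ℝ), IKB.gf (fun y => β * y + ztil y t) s ξ, ?_, ?_, ?_⟩
  · intro s t ht
    have hcd := (hyp1 t ht).1
    have hd : Differentiable ℝ (fun y => β * y + ztil y t) := IKB.line_diff hcd
    have hH := IKB.line_holder (β := β) hα0 hcd hMtop (hypM t ht)
    have hsec := IKB.line_sec (β := β) (f := fun s' => ztil s' t)
      (fun s' => IKB.hNorm_sup hMtop (hypM t ht) s')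
    have hpv := IKB.pv_tendsto hα0 hα1' hd hH hsec s
    simp only [lineFun2]
    simpa only [IKB.Ff] using hpv
  · exact IKB.I_contOn hα0 hα1' hMtop (fun t ht => (hyp1 t ht).1) hyp2 hypM
  · intro s t ht A B H hA hB hH
    have hcd := (hyp1 t ht).1
    have hd : Differentiable ℝ (fun y => β * y + ztil y t) := IKB.line_diff hcd
    simp only [lineFun2] at hH hB
    have hsec := IKB.line_sec (β := β) (f := fun s' => ztil s' t) hA
    have hb := IKB.gf_integral_bound hα0 hα1' hd hH hsec s
    have hH0 : 0 ≤ H := IKB.H_nonneg _ hH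
    have hA0 : 0 ≤ A := (abs_nonneg _).trans (hA 0)
    have hB0 : 0 ≤ B := (abs_nonneg _).trans (hB 0)
    have hαi : 0 < 1 / α := by positivity
    calc |∫ ξ in Ioi (0:ℝ), IKB.gf (fun y => β * y + ztil y t) s ξ|
        ≤ 2 * H / α + 4 * A := hb
      _ ≤ (4 + 2 / α) * (A + B + H) := by
          have e : (4 + 2 / α) * (A + B + H) - (2 * H / α + 4 * A)
              = 4 * B + 4 * H + (2 * A + 2 * B) * (1 / α) := by
            field_simp
            ring
          nlinarith [mul_nonneg (by linarith : (0:ℝ) ≤ 2 * A + 2 * B) (le_of_lt hαi)]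
end
end
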